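/- In the free group F₂ = ⟨a, b⟩, the automorphism φ defined by a ↦ ab, b ↦ b has fixed subgroup equal to the subgroup generated by b and aba⁻¹. -/

import Mathlib

namespace FixTransAux
open FreeGroup

def hd (u : FreeGroup (Fin 2)) : Option (Fin 2 × Bool) := u.toWord.head?

lemma hd_eq {u : FreeGroup (Fin 2)} {x L} (h : u.toWord = x :: L) : hd u = some x := by
  rw [hd, h]; rfl

lemma reduced_tail {x : Fin 2 × Bool} {L} (h : reduce (x :: L) = x :: L) :
    reduce L = L := by
  rw [reduce.cons] at h
  cases h' : reduce L with
  | nil =>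
    rw [h'] at h
    change [x] = x :: L at h
    simp only [List.cons.injEq] at h
    obtain ⟨-, h2⟩ := h
    subst h2
    rfl
  | cons y t =>
    rw [h'] at h
    change (if x.1 = y.1 ∧ x.2 = !y.2 then t else x :: y :: t) = x :: L at h
    by_cases hc : x.1 = y.1 ∧ x.2 = !y.2
    · rw [if_pos hc] at h
      have hlen : (reduce L).length ≤ L.length := Red.length_le reduce.red
      rw [h', h] at hlen
      simp only [List.length_cons] at hlen
      omega
    · rw [if_neg hc] at h
      simp only [List.cons.injEq] at h
      obtain ⟨-, h2⟩ := h
      subst h2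
      rfl

lemma peel {u : FreeGroup (Fin 2)} {x L} (h : u.toWord = x :: L) :
    u = FreeGroup.mk [x] * FreeGroup.mk L ∧ (FreeGroup.mk L).toWord = L := by
  have hr : reduce (x :: L) = x :: L := by rw [← h]; exact reduce_toWord u
  have hL : reduce L = L := reduced_tail hr
  constructor
  · rw [← mk_toWord (x := u), h, show x :: L = [x] ++ L from rfl, ← mul_mk]
  · rw [toWord_mk, hL]

lemma peel_nc {u : FreeGroup (Fin 2)} {x y L'} (h : u.toWord = x :: y :: L') :
    ¬(x.1 = y.1 ∧ x.2 = !y.2) := by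
  intro hc
  have hr : reduce (x :: y :: L') = x :: y :: L' := by rw [← h]; exact reduce_toWord u
  have h2 : reduce (y :: L') = y :: L' := reduced_tail hr
  rw [reduce.cons, h2] at hr
  change (if x.1 = y.1 ∧ x.2 = !y.2 then L' else x :: y :: L') = x :: y :: L' at hr
  rw [if_pos hc] at hr
  have := congrArg List.length hr
  simp only [List.length_cons] at this
  omega

lemma toWord_cons (x : Fin 2 × Bool) (u : FreeGroup (Fin 2))
    (h : ∀ y, u.toWord.head? = some y → ¬(x.1 = y.1 ∧ x.2 = !y.2)) :
    (FreeGroup.mk [x] * u).toWord = x :: u.toWord := by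
  have e : FreeGroup.mk [x] * u = FreeGroup.mk (x :: u.toWord) := by
    rw [← mk_toWord (x := u), mul_mk, mk_toWord]
    rfl
  rw [e, toWord_mk, reduce.cons, reduce_toWord]
  cases h' : u.toWord with
  | nil => rfl
  | cons y t =>
    change (if x.1 = y.1 ∧ x.2 = !y.2 then t else x :: y :: t) = x :: y :: t
    rw [if_neg (h y (by rw [h']; rfl))]

lemma hd_mul (x : Fin 2 × Bool) (u : FreeGroup (Fin 2)) (h : hd u ≠ some (x.1, !x.2)) :
    hd (FreeGroup.mk [x] * u) = some x := by
  rw [hd, toWord_cons x u ?_]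
  · rfl
  · intro y hy hc
    obtain ⟨h1, h2⟩ := hc
    apply h
    rw [hd, hy]
    congr 1
    refine Prod.ext h1.symm ?_
    rw [h2, Bool.not_not]

lemma mk_letter_true (i : Fin 2) : FreeGroup.mk [(i, true)] = FreeGroup.of i := rfl

lemma mk_letter_false (i : Fin 2) : FreeGroup.mk [(i, false)] = (FreeGroup.of i)⁻¹ := by
  rw [show (FreeGroup.of i : FreeGroup (Fin 2)) = FreeGroup.mk [(i, true)] from rfl, inv_mk]
  simp [invRev]

lemma hd_one : hd (1 : FreeGroup (Fin 2)) = none := by rw [hd, toWord_one]; rfl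

lemma letter_cases (x : Fin 2 × Bool) :
    x = (0, true) ∨ x = (0, false) ∨ x = (1, true) ∨ x = (1, false) := by
  obtain ⟨i, s⟩ := x
  fin_cases i <;> cases s <;> decide

lemma mk_nil : FreeGroup.mk ([] : List (Fin 2 × Bool)) = 1 := one_eq_mk.symm

lemma hd_a (u : FreeGroup (Fin 2)) (h : hd u ≠ some (0, false)) :
    hd (FreeGroup.of 0 * u) = some (0, true) := by
  rw [← mk_letter_true]; exact hd_mul (0, true) u h

lemma hd_A (u : FreeGroup (Fin 2)) (h : hd u ≠ some (0, true)) :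
    hd ((FreeGroup.of 0)⁻¹ * u) = some (0, false) := by
  rw [← mk_letter_false]; exact hd_mul (0, false) u h

lemma hd_b (u : FreeGroup (Fin 2)) (h : hd u ≠ some (1, false)) :
    hd (FreeGroup.of 1 * u) = some (1, true) := by
  rw [← mk_letter_true]; exact hd_mul (1, true) u h

lemma hd_B (u : FreeGroup (Fin 2)) (h : hd u ≠ some (1, true)) :
    hd ((FreeGroup.of 1)⁻¹ * u) = some (1, false) := by
  rw [← mk_letter_false]; exact hd_mul (1, false) u h

lemma hd_of (i : Fin 2) : hd (FreeGroup.of i) = some (i, true) := by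
  rw [hd, toWord_of]; rfl

lemma hd_inv_of (i : Fin 2) : hd ((FreeGroup.of i)⁻¹) = some (i, false) := by
  rw [hd, toWord_inv, toWord_of]; rfl

section
variable (φ : FreeGroup (Fin 2) ≃* FreeGroup (Fin 2))
  (ha : φ (FreeGroup.of 0) = FreeGroup.of 0 * FreeGroup.of 1)
  (hb : φ (FreeGroup.of 1) = FreeGroup.of 1)

include ha in
lemma phia (v : FreeGroup (Fin 2)) :
    φ (FreeGroup.of 0 * v) = FreeGroup.of 0 * (FreeGroup.of 1 * φ v) := by
  rw [_root_.map_mul, ha, mul_assoc]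

include ha in
lemma phiA (v : FreeGroup (Fin 2)) :
    φ ((FreeGroup.of 0)⁻¹ * v) = (FreeGroup.of 1)⁻¹ * ((FreeGroup.of 0)⁻¹ * φ v) := by
  rw [_root_.map_mul, _root_.map_inv, ha, mul_inv_rev, mul_assoc]

include hb in
lemma phib (v : FreeGroup (Fin 2)) :
    φ (FreeGroup.of 1 * v) = FreeGroup.of 1 * φ v := by
  rw [_root_.map_mul, hb]

include hb in
lemma phiB (v : FreeGroup (Fin 2)) :
    φ ((FreeGroup.of 1)⁻¹ * v) = (FreeGroup.of 1)⁻¹ * φ v := by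
  rw [_root_.map_mul, _root_.map_inv, hb]

include ha hb in
lemma FL : ∀ n : ℕ, ∀ u : FreeGroup (Fin 2), u.toWord.length ≤ n →
    ((hd u = some (0, true) → hd (φ u) = some (0, true)) ∧
     (hd u = some (0, false) → hd (φ u) = some (1, false)) ∧
     (hd u = some (1, false) → hd (φ u) = some (1, false)) ∧
     (hd u = some (1, true) → hd (φ u) = some (1, true) ∨ hd (φ u) = some (0, false))) := by
  intro n
  induction n with
  | zero =>
    intro u hu
    have hnil : u.toWord = [] := List.length_eq_zero_iff.mp (Nat.le_zero.mp hu)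
    have hn : hd u = none := by rw [hd, hnil]; rfl
    refine ⟨?_, ?_, ?_, ?_⟩ <;> intro h <;> rw [hn] at h <;> exact nomatch h
  | succ n IH =>
    intro u hu
    cases htw : u.toWord with
    | nil =>
      have hn : hd u = none := by rw [hd, htw]; rfl
      refine ⟨?_, ?_, ?_, ?_⟩ <;> intro h <;> rw [hn] at h <;> exact nomatch h
    | cons x L =>
      obtain ⟨hu_eq, hL⟩ := peel htw
      have hdu : hd u = some x := hd_eq htw
      have hlen : L.length ≤ n := by
        have h' := hu; rw [htw] at h'; simpa using h'
      rcases letter_cases x with rfl | rfl | rfl | rfl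
      -- ================ x = (0, true) ================
      · rw [mk_letter_true] at hu_eq
        refine ⟨?_, ?_, ?_, ?_⟩
        · intro h
          cases L with
          | nil =>
            rw [mk_nil, mul_one] at hu_eq
            rw [hu_eq, ha]
            exact hd_a _ (by rw [hd_of]; decide)
          | cons y L' =>
            have nc := peel_nc htw
            have hdv : hd (FreeGroup.mk (y :: L')) = some y := hd_eq hL
            have IHv := IH (FreeGroup.mk (y :: L')) (by rw [hL]; exact hlen)
            rw [hu_eq, phia φ ha]
            rcases letter_cases y with rfl | rfl | rfl | rfl
            · -- y = (0,true) : IH1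
              have hf := IHv.1 hdv
              have h1 := hd_b (φ (FreeGroup.mk ((0, true) :: L'))) (by rw [hf]; decide)
              exact hd_a _ (by rw [h1]; decide)
            · -- y = (0,false) : excluded
              exact absurd (by decide) nc
            · -- y = (1,true) : IH4
              have hf := IHv.2.2.2 hdv
              have h1 := hd_b (φ (FreeGroup.mk ((1, true) :: L')))
                (by rcases hf with h' | h' <;> rw [h'] <;> decide)
              exact hd_a _ (by rw [h1]; decide)
            · -- y = (1,false) : double peel
              obtain ⟨hv_eq, hL'⟩ := peel hL
              rw [mk_letter_false] at hv_eq
              rw [hv_eq, phiB φ hb, mul_inv_cancel_left]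
              cases L' with
              | nil =>
                rw [mk_nil, _root_.map_one, mul_one]
                exact hd_of 0
              | cons z L'' =>
                have nc2 := peel_nc hL
                have hdw : hd (FreeGroup.mk (z :: L'')) = some z := hd_eq hL'
                have IHw := IH (FreeGroup.mk (z :: L''))
                  (by rw [hL']; simp only [List.length_cons] at hlen ⊢; omega)
                rcases letter_cases z with rfl | rfl | rfl | rfl
                · have hf := IHw.1 hdw
                  exact hd_a _ (by rw [hf]; decide)
                · have hf := IHw.2.1 hdw
                  exact hd_a _ (by rw [hf]; decide)
                · exact absurd (by decide) nc2
                · have hf := IHw.2.2.1 hdw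
                  exact hd_a _ (by rw [hf]; decide)
        · intro h; rw [hdu] at h; exact absurd h (by decide)
        · intro h; rw [hdu] at h; exact absurd h (by decide)
        · intro h; rw [hdu] at h; exact absurd h (by decide)
      -- ================ x = (0, false) ================
      · rw [mk_letter_false] at hu_eq
        refine ⟨?_, ?_, ?_, ?_⟩
        · intro h; rw [hdu] at h; exact absurd h (by decide)
        · intro h
          cases L with
          | nil =>
            rw [mk_nil, mul_one] at hu_eq
            rw [hu_eq, _root_.map_inv, ha, mul_inv_rev]
            exact hd_B _ (by rw [hd_inv_of]; decide)
          | cons y L' =>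
            have nc := peel_nc htw
            have hdv : hd (FreeGroup.mk (y :: L')) = some y := hd_eq hL
            have IHv := IH (FreeGroup.mk (y :: L')) (by rw [hL]; exact hlen)
            rw [hu_eq, phiA φ ha]
            rcases letter_cases y with rfl | rfl | rfl | rfl
            · -- y = (0,true) : excluded
              exact absurd (by decide) nc
            · -- y = (0,false) : IH2
              have hf := IHv.2.1 hdv
              have h1 := hd_A (φ (FreeGroup.mk ((0, false) :: L'))) (by rw [hf]; decide)
              exact hd_B _ (by rw [h1]; decide)
            · -- y = (1,true) : IH4
              have hf := IHv.2.2.2 hdv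
              have h1 := hd_A (φ (FreeGroup.mk ((1, true) :: L')))
                (by rcases hf with h' | h' <;> rw [h'] <;> decide)
              exact hd_B _ (by rw [h1]; decide)
            · -- y = (1,false) : IH3
              have hf := IHv.2.2.1 hdv
              have h1 := hd_A (φ (FreeGroup.mk ((1, false) :: L'))) (by rw [hf]; decide)
              exact hd_B _ (by rw [h1]; decide)
        · intro h; rw [hdu] at h; exact absurd h (by decide)
        · intro h; rw [hdu] at h; exact absurd h (by decide)
      -- ================ x = (1, true) ================
      · rw [mk_letter_true] at hu_eq
        refine ⟨?_, ?_, ?_, ?_⟩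
        · intro h; rw [hdu] at h; exact absurd h (by decide)
        · intro h; rw [hdu] at h; exact absurd h (by decide)
        · intro h; rw [hdu] at h; exact absurd h (by decide)
        · intro h
          cases L with
          | nil =>
            rw [mk_nil, mul_one] at hu_eq
            rw [hu_eq, hb]
            exact Or.inl (hd_of 1)
          | cons y L' =>
            have nc := peel_nc htw
            have hdv : hd (FreeGroup.mk (y :: L')) = some y := hd_eq hL
            have IHv := IH (FreeGroup.mk (y :: L')) (by rw [hL]; exact hlen)
            rw [hu_eq, phib φ hb]
            rcases letter_cases y with rfl | rfl | rfl | rfl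
            · -- y = (0,true) : IH1
              have hf := IHv.1 hdv
              exact Or.inl (hd_b _ (by rw [hf]; decide))
            · -- y = (0,false) : double peel, conclude right
              obtain ⟨hv_eq, hL'⟩ := peel hL
              rw [mk_letter_false] at hv_eq
              rw [hv_eq, phiA φ ha, mul_inv_cancel_left]
              cases L' with
              | nil =>
                rw [mk_nil, _root_.map_one, mul_one]
                exact Or.inr (hd_inv_of 0)
              | cons z L'' =>
                have nc2 := peel_nc hL
                have hdw : hd (FreeGroup.mk (z :: L'')) = some z := hd_eq hL'
                have IHw := IH (FreeGroup.mk (z :: L''))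
                  (by rw [hL']; simp only [List.length_cons] at hlen ⊢; omega)
                rcases letter_cases z with rfl | rfl | rfl | rfl
                · exact absurd (by decide) nc2
                · have hf := IHw.2.1 hdw
                  exact Or.inr (hd_A _ (by rw [hf]; decide))
                · have hf := IHw.2.2.2 hdw
                  exact Or.inr (hd_A _ (by rcases hf with h' | h' <;> rw [h'] <;> decide))
                · have hf := IHw.2.2.1 hdw
                  exact Or.inr (hd_A _ (by rw [hf]; decide))
            · -- y = (1,true) : IH4
              have hf := IHv.2.2.2 hdv
              exact Or.inl (hd_b _ (by rcases hf with h' | h' <;> rw [h'] <;> decide))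
            · -- y = (1,false) : excluded
              exact absurd (by decide) nc
      -- ================ x = (1, false) ================
      · rw [mk_letter_false] at hu_eq
        refine ⟨?_, ?_, ?_, ?_⟩
        · intro h; rw [hdu] at h; exact absurd h (by decide)
        · intro h; rw [hdu] at h; exact absurd h (by decide)
        · intro h
          cases L with
          | nil =>
            rw [mk_nil, mul_one] at hu_eq
            rw [hu_eq, _root_.map_inv, hb]
            exact hd_inv_of 1
          | cons y L' =>
            have nc := peel_nc htw
            have hdv : hd (FreeGroup.mk (y :: L')) = some y := hd_eq hL
            have IHv := IH (FreeGroup.mk (y :: L')) (by rw [hL]; exact hlen)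
            rw [hu_eq, phiB φ hb]
            rcases letter_cases y with rfl | rfl | rfl | rfl
            · have hf := IHv.1 hdv
              exact hd_B _ (by rw [hf]; decide)
            · have hf := IHv.2.1 hdv
              exact hd_B _ (by rw [hf]; decide)
            · exact absurd (by decide) nc
            · have hf := IHv.2.2.1 hdv
              exact hd_B _ (by rw [hf]; decide)
        · intro h; rw [hdu] at h; exact absurd h (by decide)
lemma mulShift {g x y : FreeGroup (Fin 2)} (h : g * x = y) : x = g⁻¹ * y := by
  rw [← h, inv_mul_cancel_left]

include ha hb in
lemma main : ∀ n : ℕ, ∀ u : FreeGroup (Fin 2), u.toWord.length ≤ n →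
    ((φ u = u →
        u ∈ Subgroup.closure {FreeGroup.of 1,
          FreeGroup.of 0 * FreeGroup.of 1 * (FreeGroup.of 0)⁻¹}) ∧
     (φ u = (FreeGroup.of 1)⁻¹ * u →
        FreeGroup.of 0 * u ∈ Subgroup.closure {FreeGroup.of 1,
          FreeGroup.of 0 * FreeGroup.of 1 * (FreeGroup.of 0)⁻¹})) := by
  have Hb : FreeGroup.of (1 : Fin 2) ∈ Subgroup.closure
      {FreeGroup.of 1, FreeGroup.of 0 * FreeGroup.of 1 * (FreeGroup.of 0)⁻¹} :=
    Subgroup.subset_closure (Set.mem_insert _ _)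
  have Hc : FreeGroup.of (0 : Fin 2) * FreeGroup.of 1 * (FreeGroup.of 0)⁻¹ ∈ Subgroup.closure
      {FreeGroup.of 1, FreeGroup.of 0 * FreeGroup.of 1 * (FreeGroup.of 0)⁻¹} :=
    Subgroup.subset_closure (Set.mem_insert_of_mem _ rfl)
  intro n
  induction n with
  | zero =>
    intro u hu
    have hnil : u.toWord = [] := List.length_eq_zero_iff.mp (Nat.le_zero.mp hu)
    have hu1 : u = 1 := toWord_eq_nil_iff.mp hnil
    subst hu1
    constructor
    · intro _; exact one_mem _
    · intro h
      rw [_root_.map_one, mul_one] at h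
      exact absurd (inv_eq_one.mp h.symm) (of_ne_one 1)
  | succ n IH =>
    intro u hu
    cases htw : u.toWord with
    | nil =>
      have hu1 : u = 1 := toWord_eq_nil_iff.mp htw
      subst hu1
      constructor
      · intro _; exact one_mem _
      · intro h
        rw [_root_.map_one, mul_one] at h
        exact absurd (inv_eq_one.mp h.symm) (of_ne_one 1)
    | cons x L =>
      obtain ⟨hu_eq, hL⟩ := peel htw
      have hdu : hd u = some x := hd_eq htw
      have hlen : L.length ≤ n := by
        have h' := hu; rw [htw] at h'; simpa using h'
      have IHv := IH (FreeGroup.mk L) (by rw [hL]; exact hlen)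
      rcases letter_cases x with rfl | rfl | rfl | rfl
      -- x = (0,true) : u = a * v
      · rw [mk_letter_true] at hu_eq
        constructor
        · intro h
          rw [hu_eq, phia φ ha] at h
          have h2 : φ (FreeGroup.mk L) = (FreeGroup.of 1)⁻¹ * FreeGroup.mk L :=
            mulShift (mul_left_cancel h)
          rw [hu_eq]
          exact IHv.2 h2
        · intro h
          have f1 := (FL φ ha hb (u.toWord.length) u le_rfl).1 hdu
          rw [h] at f1
          have f2 := hd_B u (by rw [hdu]; decide)
          exact absurd (f2.symm.trans f1) (by decide)
      -- x = (0,false) : u = a⁻¹ * v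
      · constructor
        · intro h
          have f1 := (FL φ ha hb (u.toWord.length) u le_rfl).2.1 hdu
          rw [h] at f1
          exact absurd (hdu.symm.trans f1) (by decide)
        · intro h
          rw [mk_letter_false] at hu_eq
          rw [hu_eq, phiA φ ha] at h
          have h2 : φ (FreeGroup.mk L) = FreeGroup.mk L :=
            mul_left_cancel (mul_left_cancel h)
          rw [hu_eq, mul_inv_cancel_left]
          exact IHv.1 h2
      -- x = (1,true) : u = b * v
      · rw [mk_letter_true] at hu_eq
        constructor
        · intro h
          rw [hu_eq, phib φ hb] at h
          have h2 : φ (FreeGroup.mk L) = FreeGroup.mk L := mul_left_cancel h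
          rw [hu_eq]
          exact mul_mem Hb (IHv.1 h2)
        · intro h
          rw [hu_eq, phib φ hb, inv_mul_cancel_left] at h
          have h2 : φ (FreeGroup.mk L) = (FreeGroup.of 1)⁻¹ * FreeGroup.mk L := mulShift h
          have key : FreeGroup.of 0 * (FreeGroup.of 1 * FreeGroup.mk L) =
              (FreeGroup.of 0 * FreeGroup.of 1 * (FreeGroup.of 0)⁻¹) *
                (FreeGroup.of 0 * FreeGroup.mk L) := by group
          rw [hu_eq, key]
          exact mul_mem Hc (IHv.2 h2)
      -- x = (1,false) : u = b⁻¹ * v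
      · rw [mk_letter_false] at hu_eq
        constructor
        · intro h
          rw [hu_eq, phiB φ hb] at h
          have h2 : φ (FreeGroup.mk L) = FreeGroup.mk L := mul_left_cancel h
          rw [hu_eq]
          exact mul_mem (inv_mem Hb) (IHv.1 h2)
        · intro h
          rw [hu_eq, phiB φ hb] at h
          have h2 : φ (FreeGroup.mk L) = (FreeGroup.of 1)⁻¹ * FreeGroup.mk L :=
            mul_left_cancel h
          have key : FreeGroup.of 0 * ((FreeGroup.of 1)⁻¹ * FreeGroup.mk L) =
              (FreeGroup.of 0 * FreeGroup.of 1 * (FreeGroup.of 0)⁻¹)⁻¹ *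
                (FreeGroup.of 0 * FreeGroup.mk L) := by group
          rw [hu_eq, key]
          exact mul_mem (inv_mem Hc) (IHv.2 h2)
end
end FixTransAux

def fixedSubgroup {G : Type*} [Group G] (φ : G →* G) : Subgroup G where
  carrier := {g : G | φ g = g}
  one_mem' := map_one φ
  mul_mem' := by
    intro x y hx hy
    simp only [Set.mem_setOf_eq, map_mul] at *
    rw [hx, hy]
  inv_mem' := by
    intro x hx
    simp only [Set.mem_setOf_eq, map_inv] at *
    rw [hx]

theorem fix_of_transvection (φ : FreeGroup (Fin 2) ≃* FreeGroup (Fin 2))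
    (ha : φ (FreeGroup.of 0) = FreeGroup.of 0 * FreeGroup.of 1)
    (hb : φ (FreeGroup.of 1) = FreeGroup.of 1) :
    fixedSubgroup φ.toMonoidHom =
      Subgroup.closure {FreeGroup.of 1,
        FreeGroup.of 0 * FreeGroup.of 1 * (FreeGroup.of 0)⁻¹} := by
  apply le_antisymm
  · intro w hw
    have hw' : φ w = w := hw
    exact (FixTransAux.main φ ha hb w.toWord.length w le_rfl).1 hw'
  · rw [Subgroup.closure_le]
    rintro x hx
    rcases hx with rfl | hx
    · exact hb
    · have hx' : x = FreeGroup.of 0 * FreeGroup.of 1 * (FreeGroup.of 0)⁻¹ := hx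
      subst hx'
      show φ (FreeGroup.of 0 * FreeGroup.of 1 * (FreeGroup.of 0)⁻¹) = _
      rw [_root_.map_mul, _root_.map_mul, _root_.map_inv, ha, hb]
      group
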